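/- Segment norm estimate: Let E be a Banach space, p∈[1,∞), t>0, f₀∈L^p(−1,0;E), and let X:[−1,t]→E be strongly measurable with X restricted to [−1,0) equal to f₀ and ∫_0^t ‖X(u)‖_E^{p∨2} du < ∞. Then, with X_s(u):=X(s+u) for u∈[−1,0], one has (∫_0^t ‖X_s‖²_{L^p(−1,0;E)} ds)^{1/2} ≤ ‖f₀‖_{L^p(−1,0;E)} + t^{1/(p∧2)} (∫_0^t ‖X(u)‖_E^{p∨2} du)^{1/(p∨2)}. In particular s ↦ X_s belongs to L²(0,t;L^p(−1,0;E)). -/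

import Mathlib

open MeasureTheory Filter Set
open scoped ENNReal NNReal

noncomputable section

namespace SDEPaper

/-- **Remark 4.6 (segment norm estimate).** Let `E` be a Banach space, `p ∈ [1,∞)`, `t > 0`,
`f₀ ∈ L^p(−1,0;E)` and let `X : [−1,t] → E` be strongly measurable with `X = f₀` on
`[−1,0)` and `∫_0^t ‖X(u)‖^{p∨2} du < ∞`. Then, with `X_s(u) = X(s+u)`,
`(∫_0^t ‖X_s‖²_{L^p(−1,0;E)} ds)^{1/2}
  ≤ ‖f₀‖_{L^p(−1,0;E)} + t^{1/(p∧2)} (∫_0^t ‖X(u)‖^{p∨2} du)^{1/(p∨2)}`;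
in particular `s ↦ X_s` belongs to `L²(0,t;L^p(−1,0;E))`. -/
private lemma holder_aux {α : Type*} [MeasurableSpace α] (μ : Measure α)
    {f : α → ℝ≥0∞} (hf : AEMeasurable f μ) {r : ℝ} (hr : 1 ≤ r) :
    ∫⁻ a, f a ∂μ ≤ (∫⁻ a, f a ^ r ∂μ) ^ (1/r) * (μ Set.univ) ^ (1 - 1/r) := by
  rcases eq_or_lt_of_le hr with h1 | h1
  · simp [← h1]
  · have hr0 : r ≠ 0 := by positivity
    have hpq := Real.HolderConjugate.conjExponent h1
    have h := ENNReal.lintegral_mul_le_Lp_mul_Lq μ hpq hf (aemeasurable_const (b := (1:ℝ≥0∞)))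
    simp only [Pi.mul_apply, mul_one, ENNReal.one_rpow, lintegral_one] at h
    have hone : 1 / Real.conjExponent r = 1 - 1/r := by
      rw [Real.conjExponent]
      field_simp
    rwa [hone] at h


private lemma core_est {p t : ℝ} (hp : 1 ≤ p) (ht : 0 < t)
    {g : ℝ → ℝ≥0∞} (hg : Measurable g) :
    (∫⁻ s in Ioc (0:ℝ) t, (∫⁻ u in Ioc (-1:ℝ) 0, g (s + u)) ^ (2/p)) ^ (2⁻¹:ℝ) ≤
      (∫⁻ v in Ioc (-1:ℝ) 0, g v) ^ (1/p)
        + (ENNReal.ofReal t) ^ (2⁻¹:ℝ) * (∫⁻ v in Ioc (0:ℝ) t, g v) ^ (1/p) := by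
  have hp0 : (0:ℝ) < p := lt_of_lt_of_le one_pos hp
  set Fp := ∫⁻ v in Ioc (-1:ℝ) 0, g v with hFpdef
  set Cp := ∫⁻ v in Ioc (0:ℝ) t, g v with hCpdef
  set ψ : ℝ → ℝ≥0∞ := fun s => ∫⁻ v in Ioc (min (s-1) 0) 0, g v with hψdef
  -- translation
  have hshift : ∀ s : ℝ, (∫⁻ u in Ioc (-1:ℝ) 0, g (s + u)) = ∫⁻ v in Ioc (s-1) s, g v := by
    intro s
    calc (∫⁻ u in Ioc (-1:ℝ) 0, g (s + u))
        = ∫⁻ u, (Ioc (-1:ℝ) 0).indicator (fun u => g (s+u)) u :=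
          (lintegral_indicator measurableSet_Ioc _).symm
      _ = ∫⁻ u, (Ioc (s-1) s).indicator g (s + u) := by
          refine lintegral_congr fun u => ?_
          have hmem : (s + u ∈ Ioc (s-1) s) ↔ u ∈ Ioc (-1:ℝ) 0 := by
            simp only [mem_Ioc]
            constructor <;> rintro ⟨a, b⟩ <;> constructor <;> linarith
          by_cases h : u ∈ Ioc (-1:ℝ) 0
          · rw [indicator_of_mem h, indicator_of_mem (hmem.2 h)]
          · rw [indicator_of_notMem h, indicator_of_notMem (fun c => h (hmem.1 c))]
      _ = ∫⁻ v, (Ioc (s-1) s).indicator g v := lintegral_add_left_eq_self _ s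
      _ = ∫⁻ v in Ioc (s-1) s, g v := lintegral_indicator measurableSet_Ioc _
  -- domination
  have hdom : ∀ s ∈ Ioc (0:ℝ) t, (∫⁻ u in Ioc (-1:ℝ) 0, g (s + u)) ≤ ψ s + Cp := by
    intro s hs
    rw [hshift s]
    refine le_trans (lintegral_mono_set ?_) (lintegral_union_le _ _ _)
    intro v hv
    simp only [mem_Ioc, mem_union] at hv ⊢
    rcases le_or_gt v 0 with h | h
    · exact Or.inl ⟨lt_of_le_of_lt (min_le_left _ _) hv.1, h⟩
    · exact Or.inr ⟨h, hv.2.trans hs.2⟩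
  -- measurability of ψ
  have hψ_meas : Measurable ψ := by
    have heq : ψ = fun s => ∫⁻ v, (fun s v => if min (s-1) 0 < v ∧ v ≤ 0 then g v else 0) s v := by
      funext s
      show (∫⁻ v in Ioc (min (s-1) 0) 0, g v) = _
      rw [← lintegral_indicator measurableSet_Ioc]
      refine lintegral_congr fun v => ?_
      simp [Set.indicator_apply, mem_Ioc]
    rw [heq]
    refine Measurable.lintegral_prod_right ?_
    have : (Function.uncurry fun (s v : ℝ) => if min (s-1) 0 < v ∧ v ≤ 0 then g v else 0) =
        fun z : ℝ × ℝ => if min (z.1 - 1) 0 < z.2 ∧ z.2 ≤ 0 then g z.2 else 0 := rfl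
    rw [this]
    refine Measurable.ite ?_ (hg.comp measurable_snd) measurable_const
    exact MeasurableSet.inter
      (measurableSet_lt ((measurable_fst.sub measurable_const).min measurable_const) measurable_snd)
      (measurableSet_le measurable_snd measurable_const)
  -- pointwise bound for ψ
  have hψ_le : ∀ s : ℝ, 0 < s → ψ s ≤ Fp := by
    intro s hs
    exact lintegral_mono_set (Ioc_subset_Ioc_left (le_min (by linarith) (by norm_num)))
  -- integral bound for ψ
  have hψ_int : (∫⁻ s in Ioc (0:ℝ) t, ψ s) ≤ Fp := by
    have hptw : ∀ s ∈ Ioc (0:ℝ) t,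
        ψ s ≤ ∫⁻ v, (Ioc (-1:ℝ) 0).indicator g v * (Iio (v+1)).indicator 1 s := by
      intro s hs
      show (∫⁻ v in Ioc (min (s-1) 0) 0, g v) ≤ _
      rw [← lintegral_indicator measurableSet_Ioc]
      refine lintegral_mono fun v => ?_
      by_cases h : v ∈ Ioc (min (s-1) 0) 0
      · have hv0 : v ≤ 0 := h.2
        have hs1 : s - 1 < v := by
          rcases min_lt_iff.1 h.1 with h' | h'
          · exact h'
          · linarith
        rw [indicator_of_mem h,
          indicator_of_mem (show v ∈ Ioc (-1:ℝ) 0 from ⟨by linarith [hs.1], hv0⟩),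
          indicator_of_mem (show s ∈ Iio (v+1) from by simp only [mem_Iio]; linarith)]
        simp
      · rw [indicator_of_notMem h]; exact zero_le
    calc (∫⁻ s in Ioc (0:ℝ) t, ψ s)
        ≤ ∫⁻ s in Ioc (0:ℝ) t, ∫⁻ v, (Ioc (-1:ℝ) 0).indicator g v * (Iio (v+1)).indicator 1 s :=
          lintegral_mono_ae ((ae_restrict_mem measurableSet_Ioc).mono hptw)
      _ = ∫⁻ v, ∫⁻ s in Ioc (0:ℝ) t, (Ioc (-1:ℝ) 0).indicator g v * (Iio (v+1)).indicator 1 s := by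
          refine lintegral_lintegral_swap ?_
          refine Measurable.aemeasurable ?_
          show Measurable fun z : ℝ × ℝ =>
            (Ioc (-1:ℝ) 0).indicator g z.2 * (Iio (z.2+1)).indicator 1 z.1
          refine Measurable.mul ((hg.indicator measurableSet_Ioc).comp measurable_snd) ?_
          have : (fun z : ℝ × ℝ => (Iio (z.2+1)).indicator (1 : ℝ → ℝ≥0∞) z.1) =
              fun z : ℝ × ℝ => if z.1 < z.2 + 1 then 1 else 0 := by
            funext z
            simp [Set.indicator_apply, mem_Iio]
          rw [this]
          exact Measurable.ite (measurableSet_lt measurable_fst (measurable_snd.add_const 1))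
            measurable_const measurable_const
      _ = ∫⁻ v, (Ioc (-1:ℝ) 0).indicator g v * (volume.restrict (Ioc (0:ℝ) t)) (Iio (v+1)) := by
          refine lintegral_congr fun v => ?_
          rw [lintegral_const_mul _ (measurable_one.indicator measurableSet_Iio),
              lintegral_indicator_one measurableSet_Iio]
      _ ≤ ∫⁻ v, (Ioc (-1:ℝ) 0).indicator g v := by
          refine lintegral_mono fun v => ?_
          by_cases h : v ∈ Ioc (-1:ℝ) 0
          · have hle1 : (volume.restrict (Ioc (0:ℝ) t)) (Iio (v+1)) ≤ 1 := by
              rw [Measure.restrict_apply measurableSet_Iio]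
              have hsub : Iio (v+1) ∩ Ioc (0:ℝ) t ⊆ Ioo 0 (v+1) :=
                fun s hs => mem_Ioo.2 ⟨hs.2.1, hs.1⟩
              calc volume (Iio (v+1) ∩ Ioc (0:ℝ) t) ≤ volume (Ioo (0:ℝ) (v+1)) :=
                    measure_mono hsub
                _ ≤ 1 := by
                    rw [Real.volume_Ioo]
                    exact ENNReal.ofReal_le_one.2 (by linarith [h.2])
            calc (Ioc (-1:ℝ) 0).indicator g v * (volume.restrict (Ioc (0:ℝ) t)) (Iio (v+1))
                ≤ (Ioc (-1:ℝ) 0).indicator g v * 1 := mul_le_mul_right hle1 _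
              _ = (Ioc (-1:ℝ) 0).indicator g v := mul_one _
          · rw [indicator_of_notMem h, zero_mul]
      _ = Fp := lintegral_indicator measurableSet_Ioc _
  -- history bound
  have hhist : (∫⁻ s in Ioc (0:ℝ) t, ψ s ^ (2/p)) ≤ Fp ^ (2/p) := by
    rcases le_or_gt p 2 with hp2 | hp2
    · have hexp : (0:ℝ) ≤ 2/p - 1 := by
        rw [le_sub_iff_add_le, zero_add, le_div_iff₀ hp0]; linarith
      have hsum : (2/p) = (2/p - 1) + 1 := by ring
      have hptw : ∀ s ∈ Ioc (0:ℝ) t, ψ s ^ (2/p) ≤ Fp ^ (2/p - 1) * ψ s := by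
        intro s hs
        calc ψ s ^ (2/p) = ψ s ^ (2/p - 1) * ψ s := by
              have h' := ENNReal.rpow_add_of_nonneg (x := ψ s) (2/p - 1) 1 hexp zero_le_one
              rw [show (2/p - 1 + 1 : ℝ) = 2/p by ring] at h'
              rw [h', ENNReal.rpow_one]
          _ ≤ Fp ^ (2/p - 1) * ψ s :=
              mul_le_mul_left (ENNReal.rpow_le_rpow (hψ_le s hs.1) hexp) _
      calc (∫⁻ s in Ioc (0:ℝ) t, ψ s ^ (2/p))
          ≤ ∫⁻ s in Ioc (0:ℝ) t, Fp ^ (2/p - 1) * ψ s :=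
            lintegral_mono_ae ((ae_restrict_mem measurableSet_Ioc).mono hptw)
        _ = Fp ^ (2/p - 1) * ∫⁻ s in Ioc (0:ℝ) t, ψ s := lintegral_const_mul _ hψ_meas
        _ ≤ Fp ^ (2/p - 1) * Fp := mul_le_mul_right hψ_int _
        _ = Fp ^ (2/p) := by
            have h' := ENNReal.rpow_add_of_nonneg (x := Fp) (2/p - 1) 1 hexp zero_le_one
            rw [show (2/p - 1 + 1 : ℝ) = 2/p by ring] at h'
            rw [h', ENNReal.rpow_one]
    · -- 2 < p
      have hm0 : (0:ℝ) ≤ min t 1 := le_min ht.le zero_le_one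
      have hmt : min t 1 ≤ t := min_le_left _ _
      have hzero : (∫⁻ s in Ioc (min t 1) t, ψ s ^ (2/p)) = 0 := by
        have hz : ∀ᵐ s ∂volume, s ∈ Ioc (min t 1) t → ψ s ^ (2/p) = (0:ℝ≥0∞) := by
          refine ae_of_all _ fun s hs => ?_
          have h1s : 1 < s := by
            rcases le_total t 1 with h | h
            · rw [min_eq_left h] at hs; exact absurd hs.2 (not_le.2 hs.1)
            · rw [min_eq_right h] at hs; exact hs.1
          have hψ0 : ψ s = 0 := by
            show (∫⁻ v in Ioc (min (s-1) 0) 0, g v) = 0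
            rw [min_eq_right (by linarith : (0:ℝ) ≤ s - 1), Ioc_self,
              Measure.restrict_empty, lintegral_zero_measure]
          rw [hψ0, ENNReal.zero_rpow_of_pos (by positivity)]
        calc (∫⁻ s in Ioc (min t 1) t, ψ s ^ (2/p))
            = ∫⁻ _ in Ioc (min t 1) t, (0:ℝ≥0∞) := setLIntegral_congr_fun_ae measurableSet_Ioc hz
          _ = 0 := lintegral_zero
      have hsplit : (∫⁻ s in Ioc (0:ℝ) t, ψ s ^ (2/p))
          = ∫⁻ s in Ioc (0:ℝ) (min t 1), ψ s ^ (2/p) := by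
        rw [← Ioc_union_Ioc_eq_Ioc hm0 hmt,
          lintegral_union measurableSet_Ioc (Ioc_disjoint_Ioc_of_le le_rfl), hzero, add_zero]
      rw [hsplit]
      have hr1 : (1:ℝ) ≤ p/2 := by rw [le_div_iff₀ (by norm_num : (0:ℝ) < 2)]; linarith
      have h := holder_aux (volume.restrict (Ioc (0:ℝ) (min t 1)))
        ((hψ_meas.pow_const (2/p)).aemeasurable) hr1
      have hpow : ∀ s:ℝ, (ψ s ^ (2/p)) ^ (p/2) = ψ s := by
        intro s
        rw [← ENNReal.rpow_mul, show (2/p) * (p/2) = 1 by field_simp, ENNReal.rpow_one]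
      simp only [hpow] at h
      refine le_trans h ?_
      have h1 : (∫⁻ s in Ioc (0:ℝ) (min t 1), ψ s) ≤ Fp :=
        le_trans (lintegral_mono_set (Ioc_subset_Ioc_right hmt)) hψ_int
      have hμI : (volume.restrict (Ioc (0:ℝ) (min t 1))) univ ≤ 1 := by
        rw [Measure.restrict_apply_univ, Real.volume_Ioc, sub_zero]
        exact ENNReal.ofReal_le_one.2 (min_le_right t 1)
      have hexp2 : (0:ℝ) ≤ 1 - 1/(p/2) := by
        rw [one_div_div, sub_nonneg, div_le_one hp0]; linarith
      calc (∫⁻ s in Ioc (0:ℝ) (min t 1), ψ s) ^ (1/(p/2))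
            * (volume.restrict (Ioc (0:ℝ) (min t 1))) univ ^ (1 - 1/(p/2))
          ≤ Fp ^ (1/(p/2)) * 1 :=
            mul_le_mul' (ENNReal.rpow_le_rpow h1 (by positivity))
              (ENNReal.rpow_le_one hμI hexp2)
        _ = Fp ^ (2/p) := by rw [mul_one, one_div_div]
  -- Minkowski
  have hmono2 : ∀ s ∈ Ioc (0:ℝ) t,
      (∫⁻ u in Ioc (-1:ℝ) 0, g (s + u)) ^ (2/p)
        ≤ (((fun s => ψ s ^ (1/p)) + (fun _ => Cp ^ (1/p)) : ℝ → ℝ≥0∞)) s ^ (2:ℝ) := by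
    intro s hs
    have h1 : (∫⁻ u in Ioc (-1:ℝ) 0, g (s+u)) ^ (1/p) ≤ ψ s ^ (1/p) + Cp ^ (1/p) := by
      refine le_trans (ENNReal.rpow_le_rpow (hdom s hs) (by positivity)) ?_
      exact ENNReal.rpow_add_le_add_rpow _ _ (by positivity) (by rw [div_le_one hp0]; exact hp)
    calc (∫⁻ u in Ioc (-1:ℝ) 0, g (s + u)) ^ (2/p)
        = ((∫⁻ u in Ioc (-1:ℝ) 0, g (s + u)) ^ (1/p)) ^ (2:ℝ) := by
          rw [← ENNReal.rpow_mul, show (1/p) * 2 = 2/p by ring]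
      _ ≤ _ := by
          simp only [Pi.add_apply]
          exact ENNReal.rpow_le_rpow h1 (by norm_num)
  have mink := ENNReal.lintegral_Lp_add_le (μ := volume.restrict (Ioc (0:ℝ) t))
      ((hψ_meas.pow_const (1/p)).aemeasurable) (aemeasurable_const (b := Cp ^ (1/p)))
      (by norm_num : (1:ℝ) ≤ 2)
  have hA : (∫⁻ s in Ioc (0:ℝ) t, (ψ s ^ (1/p)) ^ (2:ℝ)) ^ (1/(2:ℝ)) ≤ Fp ^ (1/p) := by
    have hpw : ∀ s:ℝ, (ψ s ^ (1/p)) ^ (2:ℝ) = ψ s ^ (2/p) := fun s => by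
      rw [← ENNReal.rpow_mul, show (1/p) * 2 = 2/p by ring]
    simp only [hpw]
    refine le_trans (ENNReal.rpow_le_rpow hhist (by norm_num)) ?_
    rw [← ENNReal.rpow_mul, show (2/p) * (1/2) = 1/p by ring]
  have hB : (∫⁻ _ in Ioc (0:ℝ) t, (Cp ^ (1/p)) ^ (2:ℝ)) ^ (1/(2:ℝ))
      ≤ ENNReal.ofReal t ^ (2⁻¹:ℝ) * Cp ^ (1/p) := by
    rw [setLIntegral_const, Real.volume_Ioc, sub_zero,
      ENNReal.mul_rpow_of_nonneg _ _ (by norm_num : (0:ℝ) ≤ 1/2),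
      ← ENNReal.rpow_mul, show (2:ℝ) * (1/2) = 1 by norm_num, ENNReal.rpow_one,
      show (1/(2:ℝ)) = (2⁻¹:ℝ) by norm_num, mul_comm]
  calc (∫⁻ s in Ioc (0:ℝ) t, (∫⁻ u in Ioc (-1:ℝ) 0, g (s + u)) ^ (2/p)) ^ (2⁻¹:ℝ)
      ≤ (∫⁻ s in Ioc (0:ℝ) t,
          (((fun s => ψ s ^ (1/p)) + (fun _ => Cp ^ (1/p)) : ℝ → ℝ≥0∞)) s ^ (2:ℝ)) ^ (2⁻¹:ℝ) :=
        ENNReal.rpow_le_rpow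
          (lintegral_mono_ae ((ae_restrict_mem measurableSet_Ioc).mono hmono2)) (by norm_num)
    _ ≤ (∫⁻ s in Ioc (0:ℝ) t, (ψ s ^ (1/p)) ^ (2:ℝ)) ^ (1/(2:ℝ))
          + (∫⁻ _ in Ioc (0:ℝ) t, (Cp ^ (1/p)) ^ (2:ℝ)) ^ (1/(2:ℝ)) := by
        rw [show (2⁻¹:ℝ) = 1/(2:ℝ) by norm_num]
        exact mink
    _ ≤ Fp ^ (1/p) + ENNReal.ofReal t ^ (2⁻¹:ℝ) * Cp ^ (1/p) := add_le_add hA hB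

theorem segment_norm_estimate
    {E : Type*} [NormedAddCommGroup E]
    (p : ℝ) (hp : 1 ≤ p) (t : ℝ) (ht : 0 < t)
    (f₀ X : ℝ → E)
    (hXmeas : StronglyMeasurable X)
    (hf₀ : ∀ u ∈ Set.Ico (-1:ℝ) 0, X u = f₀ u)
    (hf₀p : IntegrableOn (fun u => ‖f₀ u‖ ^ p) (Set.Ioc (-1:ℝ) 0) volume)
    (hXint : IntegrableOn (fun u => ‖X u‖ ^ max p 2) (Set.Ioc (0:ℝ) t) volume) :
    IntegrableOn (fun s => (∫ u in Set.Ioc (-1:ℝ) 0, ‖X (s + u)‖ ^ p) ^ (2 / p))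
      (Set.Ioc (0:ℝ) t) volume ∧
    (∫ s in Set.Ioc (0:ℝ) t, (∫ u in Set.Ioc (-1:ℝ) 0, ‖X (s + u)‖ ^ p) ^ (2 / p))
        ^ (2⁻¹ : ℝ) ≤
      (∫ u in Set.Ioc (-1:ℝ) 0, ‖f₀ u‖ ^ p) ^ (1 / p)
        + t ^ (1 / min p 2) *
          (∫ u in Set.Ioc (0:ℝ) t, ‖X u‖ ^ max p 2) ^ (1 / max p 2) := by
  have hp0 : (0:ℝ) < p := lt_of_lt_of_le one_pos hp
  have hpq : p ≤ max p 2 := le_max_left _ _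
  have hq2 : (2:ℝ) ≤ max p 2 := le_max_right _ _
  have hq0 : (0:ℝ) < max p 2 := by linarith
  have hmin0 : (0:ℝ) < min p 2 := lt_min hp0 (by norm_num)
  have hoR : ∀ (r : ℝ), 0 ≤ r → ∀ (x : E),
      ENNReal.ofReal (‖x‖ ^ r) = (‖x‖₊ : ℝ≥0∞) ^ r := by
    intro r hr x
    rw [← enorm_eq_nnnorm, ← ofReal_norm_eq_enorm, ← ENNReal.ofReal_rpow_of_nonneg (norm_nonneg _) hr]
  have hfin : ∀ (Y : ℝ → E) (r : ℝ), 0 < r → ∀ (S : Set ℝ),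
      IntegrableOn (fun u => ‖Y u‖ ^ r) S volume →
      (∫⁻ v in S, (‖Y v‖₊ : ℝ≥0∞) ^ r) ≠ ⊤ := by
    intro Y r hr S hI
    have h2 : (∫⁻ v in S, (‖(‖Y v‖ ^ r)‖₊ : ℝ≥0∞)) < ⊤ := hI.2
    have heq : (∫⁻ v in S, (‖Y v‖₊ : ℝ≥0∞) ^ r) = ∫⁻ v in S, (‖(‖Y v‖ ^ r)‖₊ : ℝ≥0∞) :=
      lintegral_congr fun v => by
        rw [← enorm_eq_nnnorm (‖Y v‖ ^ r), Real.enorm_eq_ofReal (Real.rpow_nonneg (norm_nonneg _) _), hoR r hr.le]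
    rw [heq]; exact h2.ne
  have hrepr : ∀ (Y : ℝ → E) (r : ℝ), 0 < r → ∀ (S : Set ℝ),
      AEStronglyMeasurable (fun u => ‖Y u‖ ^ r) (volume.restrict S) →
      (∫ v in S, ‖Y v‖ ^ r) = (∫⁻ v in S, (‖Y v‖₊ : ℝ≥0∞) ^ r).toReal := by
    intro Y r hr S hm
    rw [integral_eq_lintegral_of_nonneg_ae
      (ae_of_all _ fun v => Real.rpow_nonneg (norm_nonneg _) _) hm]
    congr 1
    exact lintegral_congr fun v => hoR r hr.le _
  set Fp := ∫⁻ v in Ioc (-1:ℝ) 0, (‖X v‖₊ : ℝ≥0∞) ^ p with hFpdef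
  set Cq := ∫⁻ v in Ioc (0:ℝ) t, (‖X v‖₊ : ℝ≥0∞) ^ (max p 2) with hCqdef
  set Cp := ∫⁻ v in Ioc (0:ℝ) t, (‖X v‖₊ : ℝ≥0∞) ^ p with hCpdef
  have hXn : Measurable fun v => (‖X v‖₊ : ℝ≥0∞) := by simpa only [enorm_eq_nnnorm] using hXmeas.enorm
  have hg : Measurable fun v => (‖X v‖₊ : ℝ≥0∞) ^ p := hXn.pow_const _
  have hFp_f0 : Fp = ∫⁻ v in Ioc (-1:ℝ) 0, (‖f₀ v‖₊ : ℝ≥0∞) ^ p := by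
    rw [hFpdef, ← Measure.restrict_congr_set Ico_ae_eq_Ioc]
    exact setLIntegral_congr_fun measurableSet_Ico
      (fun v hv => by rw [hf₀ v hv])
  have hFp_ne : Fp ≠ ⊤ := by rw [hFp_f0]; exact hfin f₀ p hp0 _ hf₀p
  have hCq_ne : Cq ≠ ⊤ := hfin X (max p 2) hq0 _ hXint
  have core := core_est hp ht hg
  have hCpCq : Cp ≤ (ENNReal.ofReal t) ^ (1 - p/(max p 2)) * Cq ^ (p/(max p 2)) := by
    have hr1 : (1:ℝ) ≤ (max p 2)/p := (le_div_iff₀ hp0).2 (by linarith)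
    have h := holder_aux (volume.restrict (Ioc (0:ℝ) t)) hg.aemeasurable hr1
    have hpow : ∀ v:ℝ, ((‖X v‖₊:ℝ≥0∞) ^ p) ^ ((max p 2)/p) = (‖X v‖₊:ℝ≥0∞) ^ (max p 2) := by
      intro v; rw [← ENNReal.rpow_mul, show p * ((max p 2)/p) = max p 2 by field_simp]
    simp only [hpow] at h
    rw [Measure.restrict_apply_univ, Real.volume_Ioc, sub_zero, one_div_div] at h
    exact h.trans (le_of_eq (mul_comm _ _))
  have hexp_min : (2⁻¹:ℝ) + (1 - p/(max p 2)) * (1/p) = 1 / min p 2 := by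
    have hpne : p ≠ 0 := hp0.ne'
    rcases le_total p 2 with h | h
    · rw [max_eq_right h, min_eq_left h]
      field_simp
      try ring
    · rw [max_eq_left h, min_eq_right h]
      field_simp
      try ring
  have hfinal_enn : (∫⁻ s in Ioc (0:ℝ) t,
      (∫⁻ u in Ioc (-1:ℝ) 0, (‖X (s+u)‖₊:ℝ≥0∞)^p) ^ (2/p)) ^ (2⁻¹:ℝ)
      ≤ Fp ^ (1/p) + (ENNReal.ofReal t) ^ (1/min p 2) * Cq ^ (1/(max p 2)) := by
    refine le_trans core (add_le_add_right ?_ _)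
    have hnn1 : (0:ℝ) ≤ (1 - p/(max p 2)) * (1/p) :=
      mul_nonneg (by rw [sub_nonneg, div_le_one hq0]; exact hpq) (by positivity)
    calc ENNReal.ofReal t ^ (2⁻¹:ℝ) * Cp ^ (1/p)
        ≤ ENNReal.ofReal t ^ (2⁻¹:ℝ) *
            (((ENNReal.ofReal t) ^ (1 - p/(max p 2)) * Cq ^ (p/(max p 2))) ^ (1/p)) :=
          mul_le_mul_right (ENNReal.rpow_le_rpow hCpCq (by positivity)) _
      _ = ENNReal.ofReal t ^ (1/min p 2) * Cq ^ (1/(max p 2)) := by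
          rw [ENNReal.mul_rpow_of_nonneg _ _ (by positivity : (0:ℝ) ≤ 1/p),
            ← ENNReal.rpow_mul, ← ENNReal.rpow_mul, ← mul_assoc,
            ← ENNReal.rpow_add_of_nonneg (2⁻¹:ℝ) _ (by norm_num) hnn1,
            hexp_min, show (p/(max p 2))*(1/p) = 1/(max p 2) by
              field_simp
              try ring]
  have hRHS_ne : Fp ^ (1/p) + (ENNReal.ofReal t) ^ (1/min p 2) * Cq ^ (1/(max p 2)) ≠ ⊤ := by
    refine ENNReal.add_ne_top.2 ⟨?_, ?_⟩
    · exact ENNReal.rpow_ne_top_of_nonneg (by positivity) hFp_ne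
    · exact ENNReal.mul_ne_top
        (ENNReal.rpow_ne_top_of_nonneg (by positivity) ENNReal.ofReal_ne_top)
        (ENNReal.rpow_ne_top_of_nonneg (by positivity) hCq_ne)
  set A := ∫⁻ s in Ioc (0:ℝ) t, (∫⁻ u in Ioc (-1:ℝ) 0, (‖X (s+u)‖₊:ℝ≥0∞)^p) ^ (2/p) with hAdef
  have hA_ne : A ≠ ⊤ := by
    intro hA
    rw [hA, ENNReal.top_rpow_of_pos (by norm_num)] at hfinal_enn
    exact hRHS_ne (top_le_iff.mp hfinal_enn)
  have hφmeas : Measurable fun s => ∫⁻ u in Ioc (-1:ℝ) 0, (‖X (s+u)‖₊:ℝ≥0∞)^p := by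
    have heq : (fun s => ∫⁻ u in Ioc (-1:ℝ) 0, (‖X (s+u)‖₊:ℝ≥0∞)^p)
        = fun s => ∫⁻ u, (fun s u => if u ∈ Ioc (-1:ℝ) 0
            then (‖X (s+u)‖₊:ℝ≥0∞)^p else 0) s u := by
      funext s
      rw [← lintegral_indicator measurableSet_Ioc]
      exact lintegral_congr fun u => by simp [Set.indicator_apply]
    rw [heq]
    refine Measurable.lintegral_prod_right ?_
    show Measurable fun z : ℝ × ℝ =>
      if z.2 ∈ Ioc (-1:ℝ) 0 then (‖X (z.1+z.2)‖₊:ℝ≥0∞)^p else 0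
    refine Measurable.ite (measurable_snd measurableSet_Ioc) ?_ measurable_const
    exact (hXn.comp (measurable_fst.add measurable_snd)).pow_const _
  have hφae : ∀ᵐ s ∂(volume.restrict (Ioc (0:ℝ) t)),
      (∫⁻ u in Ioc (-1:ℝ) 0, (‖X (s+u)‖₊:ℝ≥0∞)^p) ≠ ⊤ := by
    have h := ae_lt_top (hφmeas.pow_const (2/p)) hA_ne
    filter_upwards [h] with s hs
    intro htop
    rw [htop, ENNReal.top_rpow_of_pos (by positivity)] at hs
    exact lt_irrefl _ hs
  have hR1 : ∀ s : ℝ, (∫ u in Ioc (-1:ℝ) 0, ‖X (s+u)‖ ^ p)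
      = (∫⁻ u in Ioc (-1:ℝ) 0, (‖X (s+u)‖₊:ℝ≥0∞)^p).toReal := by
    intro s
    refine hrepr (fun u => X (s+u)) p hp0 _ ?_
    exact (((hXmeas.comp_measurable
      (measurable_const_add s)).norm.measurable).pow_const p).aestronglyMeasurable
  have hInteq : (fun s => (∫ u in Ioc (-1:ℝ) 0, ‖X (s + u)‖ ^ p) ^ (2 / p))
      = fun s => ((∫⁻ u in Ioc (-1:ℝ) 0, (‖X (s+u)‖₊:ℝ≥0∞)^p).toReal) ^ (2/p) := by
    funext s; rw [hR1 s]
  have hmeasReal : AEStronglyMeasurable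
      (fun s => ((∫⁻ u in Ioc (-1:ℝ) 0, (‖X (s+u)‖₊:ℝ≥0∞)^p).toReal) ^ (2/p))
      (volume.restrict (Ioc (0:ℝ) t)) :=
    ((hφmeas.ennreal_toReal).pow_const _).aestronglyMeasurable
  have hlint_eq : (∫⁻ s in Ioc (0:ℝ) t,
      ENNReal.ofReal (((∫⁻ u in Ioc (-1:ℝ) 0, (‖X (s+u)‖₊:ℝ≥0∞)^p).toReal) ^ (2/p))) = A := by
    rw [hAdef]
    refine lintegral_congr_ae ?_
    filter_upwards [hφae] with s hs
    rw [ENNReal.toReal_rpow, ENNReal.ofReal_toReal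
      (ENNReal.rpow_ne_top_of_nonneg (by positivity) hs)]
  have hint : IntegrableOn
      (fun s => (∫ u in Ioc (-1:ℝ) 0, ‖X (s + u)‖ ^ p) ^ (2 / p)) (Ioc (0:ℝ) t) volume := by
    rw [hInteq]
    refine ⟨hmeasReal, ?_⟩
    rw [hasFiniteIntegral_iff_ofReal
      (ae_of_all _ fun s => Real.rpow_nonneg ENNReal.toReal_nonneg _)]
    rw [hlint_eq]
    exact hA_ne.lt_top
  have hOuter : (∫ s in Ioc (0:ℝ) t, (∫ u in Ioc (-1:ℝ) 0, ‖X (s + u)‖ ^ p) ^ (2 / p))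
      = A.toReal := by
    rw [hInteq, integral_eq_lintegral_of_nonneg_ae
      (ae_of_all _ fun s => Real.rpow_nonneg ENNReal.toReal_nonneg _) hmeasReal, hlint_eq]
  have hRf : (∫ u in Ioc (-1:ℝ) 0, ‖f₀ u‖ ^ p) = Fp.toReal := by
    rw [hrepr f₀ p hp0 _ hf₀p.1, hFp_f0]
  have hRX : (∫ u in Ioc (0:ℝ) t, ‖X u‖ ^ (max p 2)) = Cq.toReal := by
    rw [hrepr X (max p 2) hq0 _ hXint.1, hCqdef]
  refine ⟨hint, ?_⟩
  rw [hOuter, hRf, hRX]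
  calc A.toReal ^ (2⁻¹:ℝ) = (A ^ (2⁻¹:ℝ)).toReal := ENNReal.toReal_rpow _ _
    _ ≤ (Fp ^ (1/p) + (ENNReal.ofReal t) ^ (1/min p 2) * Cq ^ (1/(max p 2))).toReal :=
        ENNReal.toReal_mono hRHS_ne hfinal_enn
    _ = Fp.toReal ^ (1/p) + t ^ (1/min p 2) * Cq.toReal ^ (1/(max p 2)) := by
        rw [ENNReal.toReal_add (ENNReal.rpow_ne_top_of_nonneg (by positivity) hFp_ne)
            (ENNReal.mul_ne_top
              (ENNReal.rpow_ne_top_of_nonneg (by positivity) ENNReal.ofReal_ne_top)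
              (ENNReal.rpow_ne_top_of_nonneg (by positivity) hCq_ne)),
          ENNReal.toReal_mul, ← ENNReal.toReal_rpow, ← ENNReal.toReal_rpow,
          ← ENNReal.toReal_rpow, ENNReal.toReal_ofReal ht.le]


end SDEPaper
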